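/- Let G = (V, E, ends) be a multigraph with n = |V| vertices and let f be a weak parking function of G. Then there exists a bijection Π : Fin n ≃ V such that for every i ∈ Fin n, f(Π i) is at most the number of edges e ∈ E with ends e = s(Π i, Π j) for some j ≤ i (loops at Π i are counted, once each). -/

import Mathlib

open Finset

/-- `d̂_S(v)`: the number of edges joining `v` to `(V ∖ S) ∪ {v}`
(loops at `v` counted once each). -/
def dhat {V E : Type*} [Fintype V] [Fintype E] [DecidableEq V]
    (ends : E → Sym2 V) (S : Finset V) (v : V) : ℕ :=
  (Finset.univ.filter fun e : E => ∃ u : V, ends e = s(v, u) ∧ (u = v ∨ u ∉ S)).card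

/-- A weak parking function of a multigraph: for every nonempty `S ⊆ V` there is
`v ∈ S` with `f v ≤ d̂_S(v)`. -/
def IsWeakParkingFunction {V E : Type*} [Fintype V] [Fintype E] [DecidableEq V]
    (ends : E → Sym2 V) (f : V → ℕ) : Prop :=
  ∀ S : Finset V, S.Nonempty → ∃ v ∈ S, f v ≤ dhat ends S v

lemma aux_park {V E : Type*} [Fintype V] [Fintype E] [DecidableEq V]
    (ends : E → Sym2 V) (f : V → ℕ)
    (hf : ∀ S : Finset V, S.Nonempty → ∃ v ∈ S, f v ≤
      (Finset.univ.filter fun e : E =>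
        ∃ u : V, ends e = s(v, u) ∧ (u = v ∨ u ∉ S)).card) :
    ∀ n (S : Finset V), S.card = n → ∃ g : Fin n → V, Function.Injective g ∧
      (∀ i, g i ∈ S) ∧ ∀ i : Fin n, f (g i) ≤ (Finset.univ.filter fun e : E =>
        ∃ u : V, ends e = s(g i, u) ∧ (u = g i ∨ u ∉ S ∨ ∃ j, j < i ∧ u = g j)).card := by
  intro n
  induction n with
  | zero => intro S _; exact ⟨Fin.elim0, fun i => i.elim0, fun i => i.elim0, fun i => i.elim0⟩
  | succ n ih =>
    intro S hS
    have hne : S.Nonempty := Finset.card_pos.mp (by omega)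
    obtain ⟨v, hvS, hv⟩ := hf S hne
    obtain ⟨g', hinj', hmem', hprop'⟩ := ih (S.erase v)
      (by rw [Finset.card_erase_of_mem hvS, hS]; omega)
    refine ⟨Fin.cases v g', ?_, ?_, ?_⟩
    · intro a b
      induction a using Fin.cases with
      | zero =>
        induction b using Fin.cases with
        | zero => intro; rfl
        | succ b =>
          simp only [Fin.cases_zero, Fin.cases_succ]
          intro h
          exact absurd (hmem' b) (by rw [← h]; simp)
      | succ a =>
        induction b using Fin.cases with
        | zero =>
          simp only [Fin.cases_zero, Fin.cases_succ]
          intro h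
          exact absurd (hmem' a) (by rw [h]; simp)
        | succ b =>
          simp only [Fin.cases_succ]
          intro h
          exact congrArg Fin.succ (hinj' h)
    · intro i
      induction i using Fin.cases with
      | zero => simpa using hvS
      | succ i => exact Finset.mem_of_mem_erase (by simpa using hmem' i)
    · intro i
      induction i using Fin.cases with
      | zero =>
        simp only [Fin.cases_zero]
        refine hv.trans (Finset.card_le_card ?_)
        intro e he
        simp only [Finset.mem_filter, Finset.mem_univ, true_and] at he ⊢
        obtain ⟨u, h1, h2⟩ := he
        exact Finset.mem_filter.mpr ⟨Finset.mem_univ _, u, h1, by tauto⟩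
      | succ i =>
        simp only [Fin.cases_succ]
        refine (hprop' i).trans (Finset.card_le_card ?_)
        intro e he
        simp only [Finset.mem_filter, Finset.mem_univ, true_and] at he ⊢
        obtain ⟨u, h1, h2⟩ := he
        refine Finset.mem_filter.mpr ⟨Finset.mem_univ _, u, h1, ?_⟩
        rcases h2 with h2 | h2 | ⟨j, hj, hju⟩
        · exact Or.inl h2
        · rw [Finset.mem_erase] at h2
          push_neg at h2
          by_cases huv : u = v
          · exact Or.inr (Or.inr ⟨0, Fin.succ_pos i, by simp [huv]⟩)
          · exact Or.inr (Or.inl (h2 huv))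
        · exact Or.inr (Or.inr ⟨j.succ, Fin.succ_lt_succ_iff.mpr hj, by simp [hju]⟩)

/-- Every weak parking function is dominated by the parking function `f^Π` of some
linear ordering `Π` of the vertices: `f (π i)` is at most the number of edges
joining `π i` to some `π j` with `j ≤ i` (loops counted once each). -/
theorem weakParkingFunction_le_ordering
    {V E : Type*} [Fintype V] [Fintype E] [DecidableEq V]
    (ends : E → Sym2 V) (f : V → ℕ)
    (hf : IsWeakParkingFunction ends f) :
    ∃ π : Fin (Fintype.card V) ≃ V, ∀ i : Fin (Fintype.card V),
      f (π i) ≤ (Finset.univ.filter fun e : E =>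
        ∃ j : Fin (Fintype.card V), j ≤ i ∧ ends e = s(π i, π j)).card := by
  obtain ⟨g, hinj, -, hprop⟩ := aux_park ends f hf (Fintype.card V) Finset.univ
    (Finset.card_univ)
  refine ⟨Equiv.ofBijective g ((Fintype.bijective_iff_injective_and_card g).2
    ⟨hinj, by simp⟩), fun i => ?_⟩
  refine (hprop i).trans (Finset.card_le_card ?_)
  intro e he
  simp only [Finset.mem_filter, Finset.mem_univ, true_and] at he ⊢
  obtain ⟨u, h1, h2⟩ := he
  rcases h2 with h2 | h2 | ⟨j, hj, hju⟩
  · exact ⟨i, le_refl i, by simp [Equiv.ofBijective, h1, h2]⟩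
  · simp at h2
  · exact ⟨j, hj.le, by simp [Equiv.ofBijective, h1, hju]⟩
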